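/- Let ℓ ≥ 0 and n ≤ 0 be integers, and for 0 ≤ i ≤ ℓ define h_i : (0,∞) → ℝ by h_i(r) = (1+r²)^n · Σ_{j=0}^{min(−n, ℓ−i)} (−1)^j · binom(−n, j) · binom(ℓ−i, j) · r^{2j}. Then (h_0, …, h_ℓ) satisfies system (S1) with eigenvalue λ = 4n(ℓ+2) and system (S2) with eigenvalue μ = 4n(ℓ+2)(n−ℓ), for all r > 0. -/

import Mathlib

set_option maxHeartbeats 1600000

open Finset

private noncomputable def Sf (k m : ℕ) (x : ℝ) : ℝ :=
  ∑ j ∈ Finset.range (k+1), (-1:ℝ)^j * (k.choose j) * (m.choose j) * x^j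

private noncomputable def Sd (k m : ℕ) (x : ℝ) : ℝ :=
  ∑ j ∈ Finset.range (k+1), (-1:ℝ)^j * (k.choose j) * (m.choose j) * (j:ℝ) * x^(j-1)

private noncomputable def Sdd (k m : ℕ) (x : ℝ) : ℝ :=
  ∑ j ∈ Finset.range (k+1), (-1:ℝ)^j * (k.choose j) * (m.choose j) * (j:ℝ) * ((j-1:ℕ):ℝ) * x^(j-2)

private lemma hasDerivAt_Sf (k m : ℕ) (x : ℝ) :
    HasDerivAt (fun y => Sf k m y) (Sd k m x) x := by
  unfold Sf Sd
  apply HasDerivAt.fun_sum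
  intro j _
  have := (hasDerivAt_pow j x).const_mul ((-1:ℝ)^j * (k.choose j) * (m.choose j))
  refine this.congr_deriv ?_
  ring

private lemma hasDerivAt_Sd (k m : ℕ) (x : ℝ) :
    HasDerivAt (fun y => Sd k m y) (Sdd k m x) x := by
  unfold Sd Sdd
  apply HasDerivAt.fun_sum
  intro j _
  have := (hasDerivAt_pow (j-1) x).const_mul
    ((-1:ℝ)^j * (k.choose j) * (m.choose j) * (j:ℝ))
  refine this.congr_deriv ?_
  rw [show j - 1 - 1 = j - 2 by omega]
  ring

/-- cast choose identity -/
private lemma cA (m j : ℕ) : ((m.choose (j+1)):ℝ) * ((j:ℝ)+1) = (m.choose j) * ((m:ℝ) - j) := by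
  rcases le_or_gt j m with hj | hj
  · have := Nat.choose_succ_right_eq m j
    have h2 : ((m.choose (j+1) * (j+1) : ℕ) : ℝ) = ((m.choose j * (m - j) : ℕ) : ℝ) := by
      rw [this]
    push_cast [Nat.cast_sub hj] at h2
    linarith [h2]
  · rw [Nat.choose_eq_zero_of_lt hj, Nat.choose_eq_zero_of_lt (by omega)]
    norm_num


private noncomputable def Dt (k m : ℕ) (x : ℝ) (j : ℕ) : ℝ :=
  (-1:ℝ)^j * (k.choose j) * (m.choose j) * ((j:ℝ))^2 * x^(j-1)
private noncomputable def Et (k m : ℕ) (x : ℝ) (j : ℕ) : ℝ :=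
  (-1:ℝ)^j * (k.choose j) * (m.choose j) * ((k:ℝ)-j) * ((m:ℝ)-j) * x^j

private lemma DE (k m : ℕ) (x : ℝ) :
    ∑ j ∈ range (k+1), (Dt k m x j + Et k m x j) = 0 := by
  rw [Finset.sum_add_distrib, Finset.sum_range_succ' (Dt k m x) k,
    Finset.sum_range_succ (Et k m x) k]
  have hD0 : Dt k m x 0 = 0 := by simp [Dt]
  have hEk : Et k m x k = 0 := by simp [Et]
  rw [hD0, hEk, add_zero, add_zero, ← Finset.sum_add_distrib]
  apply Finset.sum_eq_zero
  intro j hj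
  have h1 := cA k j
  have h2 := cA m j
  simp only [Dt, Et]
  rw [show j + 1 - 1 = j from rfl]
  push_cast
  linear_combination ((-1:ℝ))^j * x^j * (-(((m.choose (j+1)):ℝ)*((j:ℝ)+1))) * h1
    + ((-1:ℝ))^j * x^j * (-(((k.choose j):ℝ)*((k:ℝ)-(j:ℝ)))) * h2

/-- the hypergeometric ODE -/
private lemma odeS (k m : ℕ) (x : ℝ) :
    x*(1+x)*Sdd k m x + (1+(1-(k:ℝ)-(m:ℝ))*x)*Sd k m x + (k:ℝ)*(m:ℝ)*Sf k m x = 0 := by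
  have step : x*(1+x)*Sdd k m x + (1+(1-(k:ℝ)-(m:ℝ))*x)*Sd k m x + (k:ℝ)*(m:ℝ)*Sf k m x
      = ∑ j ∈ range (k+1), (Dt k m x j + Et k m x j) := by
    unfold Sf Sd Sdd
    rw [Finset.mul_sum, Finset.mul_sum, Finset.mul_sum, ← Finset.sum_add_distrib,
      ← Finset.sum_add_distrib]
    apply Finset.sum_congr rfl
    intro j _
    simp only [Dt, Et]
    match j with
    | 0 => norm_num
    | 1 => norm_num; push_cast; ring
    | (t+2) =>
      rw [show t+2-2 = t from rfl, show t+2-1 = t+1 from rfl]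
      push_cast
      ring
  rw [step, DE]


private lemma Sd_zero (k : ℕ) (x : ℝ) : Sd k 0 x = 0 := by
  apply Finset.sum_eq_zero
  intro j _
  match j with
  | 0 => norm_num
  | (t+1) => simp [Nat.choose_eq_zero_of_lt (Nat.succ_pos t)]

/-- contiguous relation R-: x·S'_{m+1} = (m+1)(S_{m+1} - S_m) -/
private lemma relF2 (k m : ℕ) (x : ℝ) :
    x * Sd k (m+1) x = ((m:ℝ)+1) * (Sf k (m+1) x - Sf k m x) := by
  unfold Sf Sd
  rw [Finset.mul_sum, ← Finset.sum_sub_distrib, Finset.mul_sum]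
  apply Finset.sum_congr rfl
  intro j _
  match j with
  | 0 => norm_num
  | (t+1) =>
    have hnB' : ((m:ℝ)+1) * (m.choose t) = ((m+1).choose (t+1)) * ((t:ℝ)+1) := by
      exact_mod_cast Nat.add_one_mul_choose_eq m t
    have hnP' : (((m+1).choose (t+1)) : ℝ) = m.choose t + m.choose (t+1) := by
      exact_mod_cast Nat.choose_succ_succ m t
    rw [show t+1-1 = t from rfl]
    push_cast
    linear_combination ((-1:ℝ)^(t+1) * ((k.choose (t+1)):ℝ) * x^(t+1)) * (-(1:ℝ)) * hnB'
      + ((-1:ℝ)^(t+1) * ((k.choose (t+1)):ℝ) * x^(t+1)) * (-((m:ℝ)+1)) * hnP'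

private noncomputable def Dt' (k m : ℕ) (x : ℝ) (j : ℕ) : ℝ :=
  (-1:ℝ)^j * (k.choose j) * (m.choose (j-1)) * (j:ℝ) * x^(j-1)
private noncomputable def Et' (k m : ℕ) (x : ℝ) (j : ℕ) : ℝ :=
  (-1:ℝ)^j * (k.choose j) * (m.choose j) * ((k:ℝ)-j) * x^j

/-- contiguous relation for the derivative: S'_{m+1} = (1+x)S'_m - k S_m -/
private lemma relF4 (k m : ℕ) (x : ℝ) :
    Sd k (m+1) x = (1+x) * Sd k m x - (k:ℝ) * Sf k m x := by
  rw [← sub_eq_zero]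
  have step : Sd k (m+1) x - ((1+x) * Sd k m x - (k:ℝ) * Sf k m x)
      = ∑ j ∈ range (k+1), (Dt' k m x j + Et' k m x j) := by
    unfold Sf Sd
    rw [Finset.mul_sum, Finset.mul_sum, ← Finset.sum_sub_distrib, ← Finset.sum_sub_distrib]
    apply Finset.sum_congr rfl
    intro j _
    simp only [Dt', Et']
    match j with
    | 0 => norm_num
    | (t+1) =>
      have hnP' : (((m+1).choose (t+1)) : ℝ) = m.choose t + m.choose (t+1) := by
        exact_mod_cast Nat.choose_succ_succ m t
      rw [show t+1-1 = t from rfl]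
      push_cast
      linear_combination ((-1:ℝ)^(t+1) * ((k.choose (t+1)):ℝ) * ((t:ℝ)+1) * x^t) * hnP'
  rw [step]
  rw [Finset.sum_add_distrib, Finset.sum_range_succ' (Dt' k m x) k,
    Finset.sum_range_succ (Et' k m x) k]
  have hD0 : Dt' k m x 0 = 0 := by simp [Dt']
  have hEk : Et' k m x k = 0 := by simp [Et']
  rw [hD0, hEk, add_zero, add_zero, ← Finset.sum_add_distrib]
  apply Finset.sum_eq_zero
  intro j hj
  have h1 := cA k j
  simp only [Dt', Et']
  rw [show j + 1 - 1 = j from rfl]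
  push_cast
  linear_combination ((-1:ℝ))^j * x^j * (-(((m.choose j)):ℝ)) * h1


private noncomputable def G1 (k m : ℕ) (r : ℝ) : ℝ :=
  2*r*(1+r^2)^(-(k:ℤ)-1) * (-(k:ℝ) * Sf k m (r^2) + (1+r^2) * Sd k m (r^2))

private noncomputable def G2 (k m : ℕ) (r : ℝ) : ℝ :=
  2*(1+r^2)^(-(k:ℤ)-2) * ( (1+r^2)*(-(k:ℝ)*Sf k m (r^2)+(1+r^2)*Sd k m (r^2))
    + 2*r^2*(-(k:ℝ)-1)*(-(k:ℝ)*Sf k m (r^2)+(1+r^2)*Sd k m (r^2))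
    + 2*r^2*(1+r^2)*((-(k:ℝ)+1)*Sd k m (r^2)+(1+r^2)*Sdd k m (r^2)) )

private lemma hasDerivAt_inner (r : ℝ) : HasDerivAt (fun y : ℝ => 1 + y^2) (2*r) r := by
  simpa using ((hasDerivAt_pow 2 r).const_add 1)

private lemma hasDerivAt_sq (r : ℝ) : HasDerivAt (fun y : ℝ => y^2) (2*r) r := by
  simpa using (hasDerivAt_pow 2 r)

private lemma hasDerivAt_zp (c : ℤ) (r : ℝ) :
    HasDerivAt (fun y : ℝ => (1+y^2)^c) ((c:ℝ) * (1+r^2)^(c-1) * (2*r)) r := by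
  have h0 : (1:ℝ) + r^2 ≠ 0 := by positivity
  have := (hasDerivAt_zpow c (1+r^2) (Or.inl h0)).comp r (hasDerivAt_inner r)
  simpa [Function.comp_def, mul_assoc] using this

private lemma hasDerivAt_SfG (k m : ℕ) (r : ℝ) :
    HasDerivAt (fun y : ℝ => Sf k m (y^2)) (Sd k m (r^2) * (2*r)) r := by
  have := (hasDerivAt_Sf k m (r^2)).comp r (hasDerivAt_sq r)
  simpa [Function.comp_def] using this

private lemma hasDerivAt_SdG (k m : ℕ) (r : ℝ) :
    HasDerivAt (fun y : ℝ => Sd k m (y^2)) (Sdd k m (r^2) * (2*r)) r := by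
  have := (hasDerivAt_Sd k m (r^2)).comp r (hasDerivAt_sq r)
  simpa [Function.comp_def] using this

private lemma hasDerivAt_G (k m : ℕ) (r : ℝ) :
    HasDerivAt (fun y : ℝ => (1+y^2)^(-(k:ℤ)) * Sf k m (y^2)) (G1 k m r) r := by
  have h0 : (1:ℝ) + r^2 ≠ 0 := by positivity
  have hm := (hasDerivAt_zp (-(k:ℤ)) r).fun_mul (hasDerivAt_SfG k m r)
  refine hm.congr_deriv ?_
  have e1 : (1+r^2)^(-(k:ℤ)) = (1+r^2)^(-(k:ℤ)-1) * (1+r^2) := by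
    rw [← zpow_add_one₀ h0]; norm_num
  rw [G1, e1]
  push_cast
  ring

private lemma hasDerivAt_G1 (k m : ℕ) (r : ℝ) :
    HasDerivAt (fun y : ℝ => G1 k m y) (G2 k m r) r := by
  have h0 : (1:ℝ) + r^2 ≠ 0 := by positivity
  have hA : HasDerivAt (fun y : ℝ => 2*y) (2:ℝ) r := by
    simpa using (hasDerivAt_id r).const_mul (2:ℝ)
  have hB := hasDerivAt_zp (-(k:ℤ)-1) r
  have hC1 := (hasDerivAt_SfG k m r).const_mul (-(k:ℝ))
  have hC2 := (hasDerivAt_inner r).fun_mul (hasDerivAt_SdG k m r)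
  have hC := hC1.fun_add hC2
  have hm := (hA.fun_mul hB).fun_mul hC
  unfold G1
  refine hm.congr_deriv ?_
  have e1 : (1+r^2)^(-(k:ℤ)-1) = (1+r^2)^(-(k:ℤ)-2) * (1+r^2) := by
    rw [← zpow_add_one₀ h0, show (-(k:ℤ)-2+1) = (-(k:ℤ)-1) by ring]
  have e2 : (-(k:ℤ)-1-1) = (-(k:ℤ)-2) := by ring
  rw [G2, e2, e1]
  push_cast
  ring

private lemma setup (k : ℕ) (r : ℝ) (hr : 0 < r) :
    (∀ m : ℕ, Sdd k m (r^2) =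
      (-((1+(1-(k:ℝ)-(m:ℝ))*r^2) * Sd k m (r^2)) - (k:ℝ)*(m:ℝ)*Sf k m (r^2)) / (r^2*(1+r^2))) ∧
    (∀ m : ℕ, Sf k (m+1) (r^2) =
      Sf k m (r^2) + r^2*((1+r^2)*Sd k m (r^2) - (k:ℝ)*Sf k m (r^2))/((m:ℝ)+1)) ∧
    (∀ m : ℕ, Sf k m (r^2) = Sf k (m+1) (r^2) - r^2*Sd k (m+1) (r^2)/((m:ℝ)+1)) ∧
    (∀ m : ℕ, Sd k m (r^2) = (Sd k (m+1) (r^2) + (k:ℝ)*Sf k m (r^2))/(1+r^2)) ∧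
    ((1+r^2)^(-(k:ℤ)-1) = (1+r^2)^(-(k:ℤ)-2)*(1+r^2)) ∧
    ((1+r^2)^(-(k:ℤ)) = (1+r^2)^(-(k:ℤ)-2)*(1+r^2)^2) := by
  have hrne : r ≠ 0 := ne_of_gt hr
  have h0 : (0:ℝ) < 1+r^2 := by positivity
  have h0ne : (1:ℝ)+r^2 ≠ 0 := ne_of_gt h0
  refine ⟨?_, ?_, ?_, ?_, ?_, ?_⟩
  · intro m
    have h2 := odeS k m (r^2)
    field_simp
    linear_combination h2
  · intro m
    have h2 := relF2 k m (r^2)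
    rw [relF4] at h2
    have hm0 : ((m:ℝ)+1) ≠ 0 := by positivity
    field_simp
    linear_combination -h2
  · intro m
    have h2 := relF2 k m (r^2)
    have hm0 : ((m:ℝ)+1) ≠ 0 := by positivity
    field_simp
    linear_combination h2
  · intro m
    rw [relF4 k m (r^2)]
    field_simp
    ring
  · have h1 := zpow_add_one₀ h0ne (-(k:ℤ)-2)
    rwa [show (-(k:ℤ)-2+1) = (-(k:ℤ)-1) by ring] at h1
  · have h1 := zpow_add_one₀ h0ne (-(k:ℤ)-1)
    have h2 := zpow_add_one₀ h0ne (-(k:ℤ)-2)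
    rw [show (-(k:ℤ)-1+1) = (-(k:ℤ)) by ring] at h1
    rw [show (-(k:ℤ)-2+1) = (-(k:ℤ)-1) by ring] at h2
    rw [h1, h2]; ring

/-- For `n ≤ 0`, the explicit functions
`h_i(r) = (1+r²)^n · Σ_{j=0}^{min(−n,ℓ−i)} (−1)^j C(−n,j) C(ℓ−i,j) r^{2j}`
satisfy system (S1) with eigenvalue `λ = 4n(ℓ+2)` and system (S2) with eigenvalue
`μ = 4n(ℓ+2)(n−ℓ)` for all `r > 0`.  (Terms involving `h_{i−1}` or `h_{i+1}` out of
range carry coefficient zero.) -/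
theorem stmt5 (n : ℤ) (hn : n ≤ 0) (ℓ : ℕ) (h : ℕ → ℝ → ℝ)
    (hdef : ∀ i ≤ ℓ, ∀ r : ℝ,
      h i r = (1 + r ^ 2) ^ (n : ℤ) *
        ∑ j ∈ Finset.range (min (-n).toNat (ℓ - i) + 1),
          (-1 : ℝ) ^ j * ((-n).toNat.choose j) * ((ℓ - i).choose j) * r ^ (2 * j)) :
    (∀ i ≤ ℓ, ∀ r : ℝ, 0 < r →
      (1 + r ^ 2) ^ 2 * deriv (deriv (h i)) r
        + ((1 + r ^ 2) / r) * (3 + r ^ 2 - 2 * r ^ 2 * ((n : ℝ) + ℓ - i)) * deriv (h i) r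
        - 4 * i * ((ℓ : ℝ) - i + 1) * (h (i - 1) r - h i r)
        + (4 * (1 + r ^ 2) / r ^ 2) *
            (((i : ℝ) + 1) * ((ℓ : ℝ) - i) * (h (i + 1) r - h i r)
              + (i : ℝ) * ((ℓ : ℝ) - i + 1) * (h (i - 1) r - h i r))
        = (4 * (n : ℝ) * ((ℓ : ℝ) + 2)) * h i r) ∧
    (∀ i ≤ ℓ, ∀ r : ℝ, 0 < r →
      ((n : ℝ) - ℓ + 3 * i) * (1 + r ^ 2) ^ 2 * deriv (deriv (h i)) r
        + 6 * ((i : ℝ) + 1) * ((ℓ : ℝ) - i) * ((1 + r ^ 2) ^ 2 / r) * deriv (h (i + 1)) r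
        - 6 * (i : ℝ) * ((ℓ : ℝ) - i + 1) * ((1 + r ^ 2) / r) * deriv (h (i - 1)) r
        + ((n : ℝ) - ℓ + 3 * i) * ((1 + r ^ 2) / r)
            * (3 + r ^ 2 - 2 * r ^ 2 * ((n : ℝ) + ℓ - i)) * deriv (h i) r
        + 4 * ((n : ℝ) + 2 * ℓ - 3 * i) * ((1 + r ^ 2) / r ^ 2) *
            (((i : ℝ) + 1) * ((ℓ : ℝ) - i) * (h (i + 1) r - h i r)
              + (i : ℝ) * ((ℓ : ℝ) - i + 1) * (h (i - 1) r - h i r))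
        + 4 * (i : ℝ) * ((ℓ : ℝ) - i + 1) * (2 * (n : ℝ) + ℓ + 3) * (h (i - 1) r - h i r)
        = (4 * (n : ℝ) * ((ℓ : ℝ) + 2) * ((n : ℝ) - ℓ)) * h i r) := by
  obtain ⟨k, rfl⟩ : ∃ k : ℕ, n = -(k:ℤ) := ⟨(-n).toNat, by omega⟩
  simp only [neg_neg, Int.toNat_natCast] at hdef
  have hfun : ∀ i, i ≤ ℓ → h i = fun r : ℝ => (1+r^2)^(-(k:ℤ)) * Sf k (ℓ-i) (r^2) := by
    intro i hi
    funext r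
    rw [hdef i hi r]
    congr 1
    unfold Sf
    have e : ∑ j ∈ Finset.range (min k (ℓ-i)+1),
          (-1:ℝ)^j * (k.choose j) * ((ℓ-i).choose j) * r^(2*j)
        = ∑ j ∈ Finset.range (min k (ℓ-i)+1),
          (-1:ℝ)^j * (k.choose j) * ((ℓ-i).choose j) * (r^2)^j :=
      Finset.sum_congr rfl (fun j _ => by rw [← pow_mul])
    rw [e]
    apply Finset.sum_subset
    · exact Finset.range_subset_range.2 (by omega)
    · intro j hj1 hj2
      simp only [Finset.mem_range] at hj1 hj2
      have hlt : ℓ - i < j := by omega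
      simp [Nat.choose_eq_zero_of_lt hlt]
  have hD1 : ∀ i, i ≤ ℓ → ∀ r : ℝ, deriv (h i) r = G1 k (ℓ-i) r := by
    intro i hi r
    rw [hfun i hi]
    exact (hasDerivAt_G k (ℓ-i) r).deriv
  have hD2 : ∀ i, i ≤ ℓ → ∀ r : ℝ, deriv (deriv (h i)) r = G2 k (ℓ-i) r := by
    intro i hi r
    have e : deriv (h i) = fun y => G1 k (ℓ-i) y := funext fun y => hD1 i hi y
    rw [e]
    exact (hasDerivAt_G1 k (ℓ-i) r).deriv
  constructor
  · -- system (S1)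
    intro i hi r hr
    obtain ⟨hZm, hXPm, hXMm, hYMm, hupow1, hupow⟩ := setup k r hr
    have hrne : r ≠ 0 := ne_of_gt hr
    have h0 : (0:ℝ) < 1+r^2 := by positivity
    have h0ne : (1:ℝ)+r^2 ≠ 0 := ne_of_gt h0
    rcases Nat.eq_zero_or_pos i with rfl | hipos
    · rcases eq_or_lt_of_le hi with heq | hil
      · -- i = 0 = ℓ
        subst heq
        simp only [Nat.zero_sub, Nat.sub_self]
        rw [hD2 0 hi r, hD1 0 hi r]
        simp only [hfun 0 hi]
        rw [Nat.sub_self]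
        unfold G1 G2
        rw [hZm 0, Sd_zero, hupow, hupow1]
        push_cast
        field_simp
        ring
      · -- i = 0 < ℓ
        obtain ⟨t, ht⟩ : ∃ t, ℓ = t+1 := ⟨ℓ-1, by omega⟩
        simp only [Nat.zero_sub]
        rw [hD2 0 hi r, hD1 0 hi r]
        simp only [hfun 0 hi, hfun (0+1) (by omega : 0+1 ≤ ℓ)]
        rw [show ℓ - 0 = t+1 by omega, show ℓ - (0+1) = t by omega]
        unfold G1 G2
        rw [hZm (t+1), hXMm t, hupow, hupow1]
        rw [show ((ℓ:ℝ)) = (t:ℝ)+1 by exact_mod_cast congrArg (Nat.cast : ℕ → ℝ) ht]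
        have c1 : ((t:ℝ))+1 ≠ 0 := by positivity
        push_cast
        field_simp
        ring
    · obtain ⟨s, rfl⟩ : ∃ s, i = s+1 := ⟨i-1, by omega⟩
      rcases eq_or_lt_of_le hi with heq | hil
      · -- i = s+1 = ℓ
        subst heq
        simp only [Nat.add_sub_cancel]
        rw [hD2 (s+1) hi r, hD1 (s+1) hi r]
        simp only [hfun (s+1) hi, hfun s (by omega : s ≤ s+1)]
        rw [Nat.sub_self, show s+1-s = 0+1 by omega]
        unfold G1 G2
        rw [hZm 0, hXPm 0, Sd_zero, hupow, hupow1]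
        push_cast
        field_simp
        ring
      · -- 0 < i = s+1 < ℓ
        obtain ⟨t, ht⟩ : ∃ t, ℓ - (s+1) = t+1 := ⟨ℓ-s-2, by omega⟩
        simp only [Nat.add_sub_cancel]
        rw [hD2 (s+1) hi r, hD1 (s+1) hi r]
        simp only [hfun (s+1) hi, hfun s (by omega : s ≤ ℓ),
          hfun (s+1+1) (by omega : s+1+1 ≤ ℓ)]
        rw [ht, show ℓ - s = (t+1)+1 by omega, show ℓ - (s+1+1) = t by omega]
        unfold G1 G2
        rw [hZm (t+1), hXPm (t+1), hXMm t, hupow, hupow1]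
        rw [show ((ℓ:ℝ)) = (s:ℝ)+(t:ℝ)+2 by exact_mod_cast (show ℓ = s+t+2 by omega)]
        have c1 : ((t:ℝ))+1 ≠ 0 := by positivity
        have c2 : ((t:ℝ))+1+1 ≠ 0 := by positivity
        have c3 : ((t:ℝ))+2 ≠ 0 := by positivity
        push_cast
        field_simp
        ring
  · -- system (S2)
    intro i hi r hr
    obtain ⟨hZm, hXPm, hXMm, hYMm, hupow1, hupow⟩ := setup k r hr
    have hrne : r ≠ 0 := ne_of_gt hr
    have h0 : (0:ℝ) < 1+r^2 := by positivity
    have h0ne : (1:ℝ)+r^2 ≠ 0 := ne_of_gt h0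
    rcases Nat.eq_zero_or_pos i with rfl | hipos
    · rcases eq_or_lt_of_le hi with heq | hil
      · -- i = 0 = ℓ
        subst heq
        simp only [Nat.zero_sub, Nat.sub_self]
        rw [hD2 0 hi r, hD1 0 hi r]
        simp only [hfun 0 hi]
        rw [Nat.sub_self]
        unfold G1 G2
        rw [hZm 0, Sd_zero, hupow, hupow1]
        push_cast
        field_simp
        ring
      · -- i = 0 < ℓ
        obtain ⟨t, ht⟩ : ∃ t, ℓ = t+1 := ⟨ℓ-1, by omega⟩
        simp only [Nat.zero_sub]
        rw [hD2 0 hi r, hD1 0 hi r, hD1 (0+1) (by omega : 0+1 ≤ ℓ) r]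
        simp only [hfun 0 hi, hfun (0+1) (by omega : 0+1 ≤ ℓ)]
        rw [show ℓ - 0 = t+1 by omega, show ℓ - (0+1) = t by omega]
        unfold G1 G2
        rw [hZm (t+1), hYMm t, hXMm t, hupow, hupow1]
        rw [show ((ℓ:ℝ)) = (t:ℝ)+1 by exact_mod_cast congrArg (Nat.cast : ℕ → ℝ) ht]
        have c1 : ((t:ℝ))+1 ≠ 0 := by positivity
        push_cast
        field_simp
        ring
    · obtain ⟨s, rfl⟩ : ∃ s, i = s+1 := ⟨i-1, by omega⟩
      rcases eq_or_lt_of_le hi with heq | hil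
      · -- i = s+1 = ℓ
        subst heq
        simp only [Nat.add_sub_cancel]
        rw [hD2 (s+1) hi r, hD1 (s+1) hi r, hD1 s (by omega : s ≤ s+1) r]
        simp only [hfun (s+1) hi, hfun s (by omega : s ≤ s+1)]
        rw [Nat.sub_self, show s+1-s = 0+1 by omega]
        unfold G1 G2
        rw [hZm 0, hXPm 0, relF4 k 0 (r^2), Sd_zero, hupow, hupow1]
        push_cast
        field_simp
        ring
      · -- 0 < i = s+1 < ℓ
        obtain ⟨t, ht⟩ : ∃ t, ℓ - (s+1) = t+1 := ⟨ℓ-s-2, by omega⟩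
        simp only [Nat.add_sub_cancel]
        rw [hD2 (s+1) hi r, hD1 (s+1) hi r, hD1 s (by omega : s ≤ ℓ) r,
          hD1 (s+1+1) (by omega : s+1+1 ≤ ℓ) r]
        simp only [hfun (s+1) hi, hfun s (by omega : s ≤ ℓ),
          hfun (s+1+1) (by omega : s+1+1 ≤ ℓ)]
        rw [ht, show ℓ - s = (t+1)+1 by omega, show ℓ - (s+1+1) = t by omega]
        unfold G1 G2
        rw [hZm (t+1), hXPm (t+1), relF4 k (t+1) (r^2), hYMm t, hXMm t, hupow, hupow1]
        rw [show ((ℓ:ℝ)) = (s:ℝ)+(t:ℝ)+2 by exact_mod_cast (show ℓ = s+t+2 by omega)]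
        have c1 : ((t:ℝ))+1 ≠ 0 := by positivity
        have c2 : ((t:ℝ))+1+1 ≠ 0 := by positivity
        have c3 : ((t:ℝ))+2 ≠ 0 := by positivity
        push_cast
        field_simp
        ring
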